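/- Let C be an 𝔽_q-linear subspace of 𝔽_q^{m×n} with m ≤ n, such that every nonzero matrix in C has rank at least d, and suppose dim_{𝔽_q} C = n(m - d + 1) (i.e., C is an MRD-code). If d > 1, then the Delsarte dual code C^⊥ = {N ∈ 𝔽_q^{m×n} : Tr(M Nᵗ) = 0 for all M ∈ C} is an MRD-code of 𝔽_q-dimension mn - n(m-d+1), i.e., every nonzero matrix in C^⊥ has rank at least m - d + 2. -/

import Mathlib

open Matrix Module

lemma trace_form_sum {m n : Type*} [Fintype m] [Fintype n] {R : Type*} [CommRing R]
    (M N : Matrix m n R) : Matrix.trace (M * Nᵀ) = ∑ i, ∑ j, M i j * N i j := by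
  simp [Matrix.trace, Matrix.mul_apply, Matrix.diag]

lemma trace_form_nondeg {m n : Type*} [Fintype m] [DecidableEq m] [Fintype n] [DecidableEq n]
    {R : Type*} [CommRing R] (N : Matrix m n R)
    (h : ∀ M : Matrix m n R, Matrix.trace (M * Nᵀ) = 0) : N = 0 := by
  ext i j
  have := h (Matrix.single i j 1)
  rw [trace_form_sum] at this
  simpa [Matrix.single, Finset.sum_ite_eq, ite_and] using this

lemma exists_li_span_le {K V : Type*} [Field K] [AddCommGroup V] [Module K V]
    [FiniteDimensional K V] :
    ∀ (k : ℕ) (p : Submodule K V), finrank K p ≤ k → k ≤ finrank K V →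
    ∃ w : Fin k → V, LinearIndependent K w ∧ p ≤ Submodule.span K (Set.range w) := by
  intro k
  induction k with
  | zero =>
    intro p hp _
    refine ⟨Fin.elim0, linearIndependent_empty_type, ?_⟩
    have : p = ⊥ := Submodule.finrank_eq_zero.mp (Nat.le_zero.mp hp)
    simp [this]
  | succ k ih =>
    intro p hp hk
    by_cases h : finrank K p ≤ k
    · obtain ⟨w, hw, hpw⟩ := ih p h (le_of_lt hk)
      have hspan : Submodule.span K (Set.range w) ≠ ⊤ := by
        intro htop
        have h1 : finrank K (Submodule.span K (Set.range w)) = k :=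
          by simpa using finrank_span_eq_card hw
        rw [htop, finrank_top] at h1
        omega
      obtain ⟨x, hx⟩ : ∃ x, x ∉ Submodule.span K (Set.range w) := by
        by_contra hcon
        push_neg at hcon
        exact hspan (Submodule.eq_top_iff'.mpr hcon)
      refine ⟨Fin.snoc w x, linearIndependent_fin_snoc.mpr ⟨hw, hx⟩, ?_⟩
      refine le_trans hpw (Submodule.span_mono ?_)
      intro y hy
      obtain ⟨l, rfl⟩ := hy
      exact ⟨l.castSucc, by simp⟩
    · have hp' : finrank K p = k + 1 := by omega
      let b := Module.finBasisOfFinrankEq K p hp'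
      refine ⟨fun l => (b l : V), ?_, ?_⟩
      · exact b.linearIndependent.map' p.subtype (Submodule.ker_subtype p)
      · have : Set.range (fun l => (b l : V)) = p.subtype '' Set.range b := by
          rw [← Set.range_comp]; rfl
        rw [this, Submodule.span_image, b.span_eq, Submodule.map_top, Submodule.range_subtype]

lemma exists_factorization {K : Type*} [Field K] {m n k : ℕ} (N : Matrix (Fin m) (Fin n) K)
    (h1 : N.rank ≤ k) (h2 : k ≤ m) :
    ∃ (X : Matrix (Fin m) (Fin k) K) (Y : Matrix (Fin k) (Fin n) K), N = X * Y ∧ X.rank = k := by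
  have hfin : k ≤ finrank K (Fin m → K) := by rw [Module.finrank_fin_fun]; exact h2
  obtain ⟨w, hw, hpw⟩ := exists_li_span_le k (LinearMap.range N.mulVecLin) h1 hfin
  set X : Matrix (Fin m) (Fin k) K := Matrix.of fun i l => w l i with hX
  have hmv : ∀ v : Fin k → K, X.mulVec v = ∑ l, v l • w l := by
    intro v
    ext i
    simp [Matrix.mulVec, dotProduct, hX, Finset.sum_apply, mul_comm]
  have hwX : ∀ l, X.mulVec (Pi.single l 1) = w l := by
    intro l
    rw [hmv]
    rw [Finset.sum_eq_single l (fun b _ hb => by simp [Pi.single_eq_of_ne hb]) (by simp)]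
    simp
  have hker : LinearMap.ker X.mulVecLin = ⊥ := by
    rw [LinearMap.ker_eq_bot']
    intro v hv
    rw [Matrix.mulVecLin_apply, hmv] at hv
    ext l
    exact Fintype.linearIndependent_iff.mp hw v hv l
  have hrange : Submodule.span K (Set.range w) ≤ LinearMap.range X.mulVecLin := by
    rw [Submodule.span_le]
    rintro _ ⟨l, rfl⟩
    exact ⟨Pi.single l 1, hwX l⟩
  have hcol : ∀ j, ∃ y : Fin k → K, X.mulVec y = fun i => N i j := by
    intro j
    have : (fun i => N i j) ∈ LinearMap.range N.mulVecLin := by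
      refine ⟨Pi.single j 1, ?_⟩
      ext i
      simp [Matrix.mulVecLin_apply, Matrix.mulVec_single]
    exact hrange (hpw this)
  choose y hy using hcol
  refine ⟨X, Matrix.of fun l j => y j l, ?_, ?_⟩
  · ext i j
    have := congrFun (hy j) i
    simpa [Matrix.mul_apply, Matrix.mulVec, dotProduct] using this.symm
  · have := LinearMap.finrank_range_add_finrank_ker X.mulVecLin
    rw [hker, finrank_bot, Module.finrank_fin_fun] at this
    simpa [Matrix.rank] using this

lemma rank_le_of_left_mul_eq_zero {K : Type*} [Field K] {m n k : ℕ}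
    (X : Matrix (Fin m) (Fin k) K) (hX : X.rank = k)
    (M : Matrix (Fin m) (Fin n) K) (h : Xᵀ * M = 0) : M.rank ≤ m - k := by
  have hcomp : Xᵀ.mulVecLin.comp M.mulVecLin = 0 := by
    rw [← Matrix.mulVecLin_mul, h, Matrix.mulVecLin_zero]
  have hle : LinearMap.range M.mulVecLin ≤ LinearMap.ker Xᵀ.mulVecLin := by
    rintro _ ⟨v, rfl⟩
    have := congrFun (congrArg DFunLike.coe hcomp) v
    simpa using this
  have h1 : finrank K (LinearMap.ker Xᵀ.mulVecLin) = m - k := by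
    have := LinearMap.finrank_range_add_finrank_ker Xᵀ.mulVecLin
    rw [Module.finrank_fin_fun] at this
    have h2 : finrank K (LinearMap.range Xᵀ.mulVecLin) = k := by
      have := Matrix.rank_transpose X
      rw [hX] at this
      simpa [Matrix.rank] using this
    omega
  calc M.rank = finrank K (LinearMap.range M.mulVecLin) := rfl
    _ ≤ finrank K (LinearMap.ker Xᵀ.mulVecLin) := Submodule.finrank_mono hle
    _ = m - k := h1

/-- Delsarte: the dual of a linear MRD-code is MRD. -/
theorem delsarte_dual_MRD
    (q m n d : ℕ) (hmn : m ≤ n) (hd1 : 1 < d) (hdm : d ≤ m)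
    (Fq : Type*) [Field Fq] [Fintype Fq] (hq : Fintype.card Fq = q)
    (C : Submodule Fq (Matrix (Fin m) (Fin n) Fq))
    (hrank : ∀ M ∈ C, M ≠ 0 → d ≤ Matrix.rank M)
    (hdimC : Module.finrank Fq C = n * (m - d + 1))
    (Cperp : Submodule Fq (Matrix (Fin m) (Fin n) Fq))
    (hCperp : (Cperp : Set (Matrix (Fin m) (Fin n) Fq))
        = {N | ∀ M ∈ C, Matrix.trace (M * Matrix.transpose N) = 0}) :
    Module.finrank Fq Cperp = m * n - n * (m - d + 1) ∧
      ∀ N ∈ Cperp, N ≠ 0 → m - d + 2 ≤ Matrix.rank N := by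
  set k := m - d + 1 with hk
  have hmem : ∀ N, N ∈ Cperp ↔ ∀ M ∈ C, Matrix.trace (M * Nᵀ) = 0 := by
    intro N
    constructor
    · intro h
      have : N ∈ (Cperp : Set (Matrix (Fin m) (Fin n) Fq)) := h
      rw [hCperp] at this
      exact this
    · intro h
      show N ∈ (Cperp : Set (Matrix (Fin m) (Fin n) Fq))
      rw [hCperp]
      exact h
  -- the bilinear map
  let B : Matrix (Fin m) (Fin n) Fq →ₗ[Fq] Matrix (Fin m) (Fin n) Fq →ₗ[Fq] Fq :=
    LinearMap.mk₂ Fq (fun M N => Matrix.trace (M * Nᵀ))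
      (fun M M' N => by rw [Matrix.add_mul, Matrix.trace_add])
      (fun c M N => by rw [Matrix.smul_mul, Matrix.trace_smul])
      (fun M N N' => by rw [Matrix.transpose_add, Matrix.mul_add, Matrix.trace_add])
      (fun c M N => by rw [Matrix.transpose_smul, Matrix.mul_smul, Matrix.trace_smul])
  have hBflip_inj : Function.Injective B.flip := by
    rw [← LinearMap.ker_eq_bot, LinearMap.ker_eq_bot']
    intro N hN
    refine trace_form_nondeg N fun M => ?_
    exact congrFun (congrArg DFunLike.coe hN) M
  -- Part 1 : dimension
  have part1 : Module.finrank Fq Cperp = m * n - n * k := by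
    let Φ : Matrix (Fin m) (Fin n) Fq →ₗ[Fq] Module.Dual Fq C :=
      C.subtype.dualMap ∘ₗ B.flip
    have hBflip_surj : Function.Surjective B.flip := by
      have heq : finrank Fq (Matrix (Fin m) (Fin n) Fq)
          = finrank Fq (Module.Dual Fq (Matrix (Fin m) (Fin n) Fq)) :=
        (Subspace.dual_finrank_eq).symm
      exact (LinearMap.injective_iff_surjective_of_finrank_eq_finrank heq).mp hBflip_inj
    have hΦ_surj : Function.Surjective Φ :=
      (LinearMap.dualMap_surjective_of_injective C.injective_subtype).comp hBflip_surj
    have hkerΦ : LinearMap.ker Φ = Cperp := by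
      ext N
      rw [LinearMap.mem_ker, hmem]
      constructor
      · intro h M hM
        exact congrFun (congrArg DFunLike.coe h) ⟨M, hM⟩
      · intro h
        ext M
        exact h M.1 M.2
    have hrn := LinearMap.finrank_range_add_finrank_ker Φ
    rw [hkerΦ, LinearMap.range_eq_top.mpr hΦ_surj, finrank_top] at hrn
    have hdual : finrank Fq (Module.Dual Fq C) = n * k := by
      rw [Subspace.dual_finrank_eq, hdimC]
    rw [hdual, Module.finrank_matrix, Module.finrank_self, Fintype.card_fin, Fintype.card_fin,
      mul_one] at hrn
    omega
  refine ⟨part1, ?_⟩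
  -- Part 2 : minimum rank of the dual
  intro N hN hN0
  by_contra hcon
  push_neg at hcon
  have hNrank : N.rank ≤ k := by omega
  have hkm : k ≤ m := by omega
  obtain ⟨X, Y, hNXY, hXrank⟩ := exists_factorization N hNrank hkm
  -- the left-multiplication-by-Xᵀ map restricted to C
  let L : Matrix (Fin m) (Fin n) Fq →ₗ[Fq] Matrix (Fin k) (Fin n) Fq :=
    { toFun := fun M => Xᵀ * M
      map_add' := fun a b => by rw [Matrix.mul_add]
      map_smul' := fun c a => by rw [Matrix.mul_smul]; rfl }
  let f : C →ₗ[Fq] Matrix (Fin k) (Fin n) Fq := L ∘ₗ C.subtype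
  have hf_inj : Function.Injective f := by
    rw [← LinearMap.ker_eq_bot, LinearMap.ker_eq_bot']
    intro M hM
    have hXM : Xᵀ * M.1 = 0 := hM
    have hMrank : (M.1).rank ≤ m - k := rank_le_of_left_mul_eq_zero X hXrank M.1 hXM
    have : M.1 = 0 := by
      by_contra hM0
      have := hrank M.1 M.2 hM0
      omega
    exact Subtype.ext this
  have hf_surj : Function.Surjective f := by
    have heq : finrank Fq C = finrank Fq (Matrix (Fin k) (Fin n) Fq) := by
      rw [hdimC, Module.finrank_matrix, Module.finrank_self, Fintype.card_fin, Fintype.card_fin,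
        mul_one, mul_comm]
    exact (LinearMap.injective_iff_surjective_of_finrank_eq_finrank heq).mp hf_inj
  have hNmem := (hmem N).mp hN
  have key : ∀ Bm : Matrix (Fin k) (Fin n) Fq, Matrix.trace (Bm * Yᵀ) = 0 := by
    intro Bm
    obtain ⟨M, hM⟩ := hf_surj Bm
    have hXM : Xᵀ * M.1 = Bm := hM
    have h0 : Matrix.trace (M.1 * Nᵀ) = 0 := hNmem M.1 M.2
    rw [hNXY, Matrix.transpose_mul, ← Matrix.mul_assoc, Matrix.trace_mul_comm,
      ← Matrix.mul_assoc, hXM] at h0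
    exact h0
  have hY0 : Y = 0 := trace_form_nondeg Y key
  rw [hY0, Matrix.mul_zero] at hNXY
  exact hN0 hNXY
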